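/- Let p, v, t be real numbers with p > 1, v > 1 and t > 0, and set x̂ = t · v^(1/(1−p)) and ŷ = (t^p − x̂^p)^(1/p) (real powers). Then for all real x ≥ 0 and y ≥ 0: there exists γ ∈ [−v·t, v·t] with (|x − γ|^p + y^p)^(1/p) ≤ t − |γ|/v if and only if ( x^p + y^p ≤ t^p ) or ( x̂ ≤ x ∧ x ≤ v·t ∧ y·(v·t − x̂) ≤ ŷ·(v·t − x) ). -/

import Mathlib

open Real

lemma aux_rpow_sub_one_mul {p x : ℝ} (hp : 1 < p) (hx : 0 ≤ x) :
    x ^ (p - 1) * x = x ^ p := by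
  rcases hx.eq_or_lt with h | h
  · rw [← h, Real.zero_rpow (by linarith), Real.zero_rpow (by linarith), mul_zero]
  · rw [show x ^ p = x ^ (p - 1 + 1) by ring_nf, Real.rpow_add h, Real.rpow_one]

lemma aux_rpow_inv_rpow {p A : ℝ} (hp : 1 < p) (hA : 0 ≤ A) :
    (A ^ (1 / p)) ^ p = A := by
  rw [← Real.rpow_mul hA, one_div, inv_mul_cancel₀ (by linarith), Real.rpow_one]

lemma aux_rpow_rpow_inv {p A : ℝ} (hp : 1 < p) (hA : 0 ≤ A) :
    (A ^ p) ^ (1 / p) = A := by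
  rw [← Real.rpow_mul hA, mul_one_div, div_self (by linarith : p ≠ 0), Real.rpow_one]

lemma aux_holder2 {p t r a b u y : ℝ} (hp : 1 < p) (ht : 0 < t) (hr : 0 ≤ r)
    (ha : 0 ≤ a) (hb : 0 ≤ b) (hu : 0 ≤ u) (hy : 0 ≤ y)
    (hab : a ^ p + b ^ p = t ^ p) (huy : u ^ p + y ^ p ≤ r ^ p) :
    a ^ (p - 1) * u + b ^ (p - 1) * y ≤ t ^ (p - 1) * r := by
  have hp0 : (0:ℝ) < p := by linarith
  have hpne : p ≠ 0 := by linarith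
  rcases hr.eq_or_lt with h0 | hrpos
  · -- r = 0
    have hr0 : r = 0 := h0.symm
    subst hr0
    rw [Real.zero_rpow hpne] at huy
    have hup : (0:ℝ) ≤ u ^ p := Real.rpow_nonneg hu p
    have hyp' : (0:ℝ) ≤ y ^ p := Real.rpow_nonneg hy p
    have hu0 : u = 0 := by
      have : u ^ p = 0 := le_antisymm (by linarith) hup
      rcases (Real.rpow_eq_zero_iff_of_nonneg hu).mp this with ⟨h, _⟩
      exact h
    have hy0 : y = 0 := by
      have : y ^ p = 0 := le_antisymm (by linarith) hyp'
      rcases (Real.rpow_eq_zero_iff_of_nonneg hy).mp this with ⟨h, _⟩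
      exact h
    simp [hu0, hy0]
  · set K := r / t with hK_def
    have hK : 0 < K := div_pos hrpos ht
    have hterm : ∀ c w : ℝ, 0 ≤ c → 0 ≤ w →
        c ^ (p-1) * w ≤ ((p-1)/p) * (c ^ p * K) + (1/p) * (w ^ p * K ^ (1-p)) := by
      intro c w hc hw
      have hgm := Real.geom_mean_le_arith_mean2_weighted
        (w₁ := (p-1)/p) (w₂ := 1/p) (p₁ := c ^ p * K) (p₂ := w ^ p * K ^ (1-p))
        (div_nonneg (by linarith) hp0.le) (by positivity) (by positivity) (by positivity)
        (by field_simp; ring)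
      refine le_trans (le_of_eq ?_) hgm
      rw [Real.mul_rpow (Real.rpow_nonneg hc p) hK.le,
          Real.mul_rpow (Real.rpow_nonneg hw p) (Real.rpow_nonneg hK.le _),
          ← Real.rpow_mul hc, ← Real.rpow_mul hw, ← Real.rpow_mul hK.le,
          show p * ((p-1)/p) = p - 1 by field_simp,
          show p * (1/p) = 1 by field_simp, Real.rpow_one]
      have hone : K ^ ((p-1)/p) * K ^ ((1-p) * (1/p)) = 1 := by
        rw [← Real.rpow_add hK, show (p-1)/p + (1-p) * (1/p) = 0 by ring, Real.rpow_zero]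
      linear_combination (-(c ^ (p-1) * w)) * hone
    have s1 := hterm a u ha hu
    have s2 := hterm b y hb hy
    have hKp : 0 ≤ K ^ (1-p) := Real.rpow_nonneg hK.le _
    have e2 : K * t ^ p = t ^ (p-1) * r := by
      rw [← aux_rpow_sub_one_mul hp ht.le, hK_def]
      field_simp
    have e3 : K ^ (1-p) * r ^ p = t ^ (p-1) * r := by
      rw [hK_def, Real.div_rpow hr ht.le,
          ← aux_rpow_sub_one_mul hp hrpos.le,
          show (1:ℝ) - p = -(p-1) by ring, Real.rpow_neg hrpos.le, Real.rpow_neg ht.le]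
      have h1 : r ^ (p-1) ≠ 0 := ne_of_gt (Real.rpow_pos_of_pos hrpos _)
      have h2 : t ^ (p-1) ≠ 0 := ne_of_gt (Real.rpow_pos_of_pos ht _)
      field_simp
    have hsum : a ^ (p-1) * u + b ^ (p-1) * y ≤
        ((p-1)/p) * (K * (a ^ p + b ^ p)) + (1/p) * (K ^ (1-p) * (u ^ p + y ^ p)) := by
      nlinarith [s1, s2]
    have hlast : ((p-1)/p) * (K * (a ^ p + b ^ p)) + (1/p) * (K ^ (1-p) * (u ^ p + y ^ p))
        ≤ ((p-1)/p) * (t ^ (p-1) * r) + (1/p) * (t ^ (p-1) * r) := by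
      have l1 : K * (a ^ p + b ^ p) = t ^ (p-1) * r := by rw [hab]; exact e2
      have l2 : K ^ (1-p) * (u ^ p + y ^ p) ≤ t ^ (p-1) * r := by
        rw [← e3]
        exact mul_le_mul_of_nonneg_left huy hKp
      have hw1 : (0:ℝ) ≤ (p-1)/p := div_nonneg (by linarith) hp0.le
      have hw2 : (0:ℝ) ≤ 1/p := by positivity
      nlinarith [mul_le_mul_of_nonneg_left l2 hw2]
    have : ((p-1)/p) * (t ^ (p-1) * r) + (1/p) * (t ^ (p-1) * r) = t ^ (p-1) * r := by
      field_simp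
      ring
    linarith

lemma aux_core {p v t a b x y γ : ℝ} (hp : 1 < p) (hv : 1 < v) (ht : 0 < t)
    (ha : 0 ≤ a) (hb : 0 ≤ b) (hab : a ^ p + b ^ p = t ^ p)
    (haxh : a ^ (p - 1) ≤ t ^ (p - 1) / v) (hy : 0 ≤ y) (hγ0 : 0 ≤ γ)
    (h : (|x - γ| ^ p + y ^ p) ^ (1 / p) ≤ t - γ / v) :
    a ^ (p - 1) * x + b ^ (p - 1) * y ≤ t ^ p := by
  have hp0 : (0:ℝ) < p := by linarith
  have hpne : p ≠ 0 := by linarith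
  have hv0 : (0:ℝ) < v := by linarith
  set u := |x - γ| with hu_def
  have hu : 0 ≤ u := abs_nonneg _
  have hsum0 : (0:ℝ) ≤ u ^ p + y ^ p := by positivity
  have hr : 0 ≤ t - γ / v := le_trans (Real.rpow_nonneg hsum0 _) h
  have hsum : u ^ p + y ^ p ≤ (t - γ / v) ^ p := by
    calc u ^ p + y ^ p = ((u ^ p + y ^ p) ^ (1/p)) ^ p := by
          rw [← Real.rpow_mul hsum0, one_div, inv_mul_cancel₀ hpne, Real.rpow_one]
      _ ≤ (t - γ / v) ^ p := Real.rpow_le_rpow (Real.rpow_nonneg hsum0 _) h hp0.le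
  have key := aux_holder2 hp ht hr ha hb hu hy hab hsum
  have hx_le : x - γ ≤ u := le_abs_self _
  have ha' : (0:ℝ) ≤ a ^ (p-1) := Real.rpow_nonneg ha _
  have htp : t ^ (p-1) * t = t ^ p := aux_rpow_sub_one_mul hp ht.le
  calc a ^ (p-1) * x + b ^ (p-1) * y
      = a ^ (p-1) * γ + (a ^ (p-1) * (x - γ) + b ^ (p-1) * y) := by ring
    _ ≤ (t ^ (p-1) / v) * γ + (a ^ (p-1) * u + b ^ (p-1) * y) := by
        have h1 : a ^ (p-1) * (x - γ) ≤ a ^ (p-1) * u := mul_le_mul_of_nonneg_left hx_le ha'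
        have h2 : a ^ (p-1) * γ ≤ (t ^ (p-1) / v) * γ := mul_le_mul_of_nonneg_right haxh hγ0
        linarith
    _ ≤ (t ^ (p-1) / v) * γ + t ^ (p-1) * (t - γ / v) := by linarith
    _ = t ^ (p-1) * t := by field_simp; ring
    _ = t ^ p := htp

set_option maxHeartbeats 2000000 in
theorem stmt_9 (p v t : ℝ) (hp : 1 < p) (hv : 1 < v) (ht : 0 < t) :
    let xhat : ℝ := t * v ^ (1 / (1 - p))
    let yhat : ℝ := (t ^ p - xhat ^ p) ^ (1 / p)
    ∀ x y : ℝ, 0 ≤ x → 0 ≤ y →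
      ((∃ γ ∈ Set.Icc (-(v * t)) (v * t),
          (|x - γ| ^ p + y ^ p) ^ (1 / p) ≤ t - |γ| / v) ↔
        (x ^ p + y ^ p ≤ t ^ p ∨
          (xhat ≤ x ∧ x ≤ v * t ∧ y * (v * t - xhat) ≤ yhat * (v * t - x)))) := by
  intro xhat yhat x y hx hy
  have hxhat_def : xhat = t * v ^ (1 / (1 - p)) := rfl
  have hyhat_def : yhat = (t ^ p - xhat ^ p) ^ (1 / p) := rfl
  clear_value xhat yhat
  have hp0 : (0:ℝ) < p := by linarith
  have hpne : p ≠ 0 := by linarith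
  have hv0 : (0:ℝ) < v := by linarith
  have hvt : (0:ℝ) < v * t := by positivity
  have h1p : (1:ℝ) - p ≠ 0 := by linarith
  have hc0 : (0:ℝ) < v ^ (1 / (1 - p)) := Real.rpow_pos_of_pos hv0 _
  have hc1 : v ^ (1 / (1 - p)) < 1 :=
    Real.rpow_lt_one_of_one_lt_of_neg hv (by
      apply one_div_neg.mpr; linarith)
  have hxhat0 : 0 < xhat := by rw [hxhat_def]; positivity
  have hxhatlt : xhat < t := by
    have h6 := mul_lt_mul_of_pos_left hc1 ht
    rw [mul_one] at h6
    rw [hxhat_def]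
    exact h6
  have hxp_lt : xhat ^ p < t ^ p := Real.rpow_lt_rpow hxhat0.le hxhatlt hp0
  have hA : (0:ℝ) < t ^ p - xhat ^ p := by linarith
  have hyhat0 : 0 < yhat := by rw [hyhat_def]; exact Real.rpow_pos_of_pos hA _
  have hyp : yhat ^ p = t ^ p - xhat ^ p := by rw [hyhat_def]; exact aux_rpow_inv_rpow hp hA.le
  have hxh_pow : xhat ^ (p - 1) = t ^ (p - 1) / v := by
    rw [hxhat_def, Real.mul_rpow ht.le hc0.le, ← Real.rpow_mul hv0.le,
        show 1 / (1 - p) * (p - 1) = -1 by rw [div_mul_eq_mul_div, one_mul, div_eq_iff h1p]; ring,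
        Real.rpow_neg_one]
    rw [div_eq_mul_inv]
  have htp : t ^ (p - 1) * t = t ^ p := aux_rpow_sub_one_mul hp ht.le
  have hxhat_p_eq : v * xhat ^ p = t ^ (p - 1) * xhat := by
    rw [← aux_rpow_sub_one_mul hp hxhat0.le, hxh_pow]
    field_simp
  constructor
  · rintro ⟨γ, ⟨hγl, hγr⟩, hγ⟩
    have hγv : |γ| ≤ v * t := abs_le.mpr ⟨by linarith, hγr⟩
    have hg0 : 0 ≤ |γ| := abs_nonneg _
    set g := |γ| with hg_def
    have habs : |x - g| ≤ |x - γ| := by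
      rcases le_or_gt 0 γ with h | h
      · rw [hg_def, abs_of_nonneg h]
      · have h2 : |x - γ| = x - γ := abs_of_nonneg (by linarith)
        rw [hg_def, abs_of_neg h, h2]
        rcases abs_cases (x - -γ) with ⟨he, _⟩ | ⟨he, _⟩ <;> rw [he] <;> linarith
    have hγ' : (|x - g| ^ p + y ^ p) ^ (1 / p) ≤ t - g / v := by
      refine le_trans (Real.rpow_le_rpow (by positivity) ?_ (by positivity)) hγ
      have := Real.rpow_le_rpow (abs_nonneg _) habs hp0.le
      linarith
    have hr : 0 ≤ t - g / v := le_trans (Real.rpow_nonneg (by positivity) _) hγ'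
    have hxle_u : |x - g| ≤ t - g / v := by
      calc |x - g| = (|x - g| ^ p) ^ (1/p) := (aux_rpow_rpow_inv hp (abs_nonneg _)).symm
        _ ≤ (|x - g| ^ p + y ^ p) ^ (1/p) := by
            apply Real.rpow_le_rpow (by positivity) _ (by positivity)
            have : (0:ℝ) ≤ y ^ p := Real.rpow_nonneg hy p
            linarith
        _ ≤ t - g / v := hγ'
    have hxvt : x ≤ v * t := by
      have h1 : x - g ≤ |x - g| := le_abs_self _
      have h2 : x - g ≤ t - g / v := le_trans h1 hxle_u
      have h3 : g / v * v = g := div_mul_cancel₀ g hv0.ne'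
      nlinarith [mul_le_mul_of_nonneg_left h2 hv0.le,
        mul_nonneg (sub_nonneg.mpr hγv) (by linarith : (0:ℝ) ≤ v - 1)]
    by_cases hcirc : x ^ p + y ^ p ≤ t ^ p
    · exact Or.inl hcirc
    · right
      push_neg at hcirc
      have hxhat_le : xhat ≤ x := by
        by_contra hlt
        push_neg at hlt
        set s := (x ^ p + y ^ p) ^ (1/p) with hs_def
        have hxyp0 : (0:ℝ) ≤ x ^ p + y ^ p := by positivity
        have hsp : s ^ p = x ^ p + y ^ p := aux_rpow_inv_rpow hp hxyp0
        have hts : t < s := by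
          have h2 := Real.rpow_lt_rpow (Real.rpow_nonneg ht.le p) hcirc (by positivity : (0:ℝ) < 1/p)
          rwa [aux_rpow_rpow_inv hp ht.le] at h2
        have hs0 : 0 < s := lt_trans ht hts
        have hab : (t/s * x) ^ p + (t/s * y) ^ p = t ^ p := by
          rw [Real.mul_rpow (by positivity) hx, Real.mul_rpow (by positivity) hy,
              ← mul_add, ← hsp, Real.div_rpow ht.le hs0.le]
          have : s ^ p ≠ 0 := ne_of_gt (Real.rpow_pos_of_pos hs0 _)
          field_simp
        have hle : (t/s * x) ^ (p - 1) ≤ t ^ (p - 1) / v := by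
          rw [← hxh_pow]
          apply Real.rpow_le_rpow (by positivity) _ (by linarith)
          have h4 : t/s * x ≤ x :=
            mul_le_of_le_one_left hx (le_of_lt ((div_lt_one hs0).mpr hts))
          linarith
        have key := aux_core hp hv ht (by positivity) (by positivity) hab hle hy hg0 hγ'
        have ex : x ^ (p-1) * x = x ^ p := aux_rpow_sub_one_mul hp hx
        have ey : y ^ (p-1) * y = y ^ p := aux_rpow_sub_one_mul hp hy
        have hLHS : (t/s * x) ^ (p-1) * x + (t/s * y) ^ (p-1) * y
            = (t/s) ^ (p-1) * (x ^ p + y ^ p) := by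
          rw [Real.mul_rpow (by positivity) hx, Real.mul_rpow (by positivity) hy]
          linear_combination (t/s) ^ (p-1) * ex + (t/s) ^ (p-1) * ey
        have hgt : t ^ p < (t/s) ^ (p-1) * (x ^ p + y ^ p) := by
          rw [← hsp]
          have e1 : (t/s) ^ (p-1) * s ^ p = t ^ (p-1) * s := by
            rw [Real.div_rpow ht.le hs0.le, ← aux_rpow_sub_one_mul hp hs0.le]
            have : s ^ (p-1) ≠ 0 := ne_of_gt (Real.rpow_pos_of_pos hs0 _)
            field_simp
          rw [e1, ← htp]
          exact mul_lt_mul_of_pos_left hts (Real.rpow_pos_of_pos ht _)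
        linarith [hLHS ▸ key]
      refine ⟨hxhat_le, hxvt, ?_⟩
      have key := aux_core hp hv ht hxhat0.le hyhat0.le
        (by rw [hyp]; ring) (le_of_eq hxh_pow) hy hg0 hγ'
      rw [hxh_pow] at key
      have h1 : v * (yhat ^ (p-1) * y) ≤ t ^ (p-1) * (v * t - x) := by
        have k2 : v * (t ^ (p-1) / v * x + yhat ^ (p-1) * y) ≤ v * t ^ p :=
          mul_le_mul_of_nonneg_left key hv0.le
        have e : v * (t ^ (p-1) / v * x + yhat ^ (p-1) * y)
            = t ^ (p-1) * x + v * (yhat ^ (p-1) * y) := by field_simp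
        have e2 : v * t ^ p = t ^ (p-1) * (v * t) := by rw [← htp]; ring
        rw [e, e2] at k2
        linarith [k2]
      have hid : v * yhat ^ p = t ^ (p-1) * (v * t - xhat) := by
        rw [hyp]
        linear_combination (-v) * htp - hxhat_p_eq
      have hyp1 : 0 < yhat ^ (p-1) := Real.rpow_pos_of_pos hyhat0 _
      have hD : 0 < v * t - xhat := by nlinarith
      have hyy : yhat ^ p = yhat ^ (p-1) * yhat := (aux_rpow_sub_one_mul hp hyhat0.le).symm
      have chain : (v * yhat ^ (p-1)) * (y * (v * t - xhat))
          ≤ (v * yhat ^ (p-1)) * (yhat * (v * t - x)) := by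
        calc (v * yhat ^ (p-1)) * (y * (v * t - xhat))
            = (v * t - xhat) * (v * (yhat ^ (p-1) * y)) := by ring
          _ ≤ (v * t - xhat) * (t ^ (p-1) * (v * t - x)) := mul_le_mul_of_nonneg_left h1 hD.le
          _ = (v * yhat ^ p) * (v * t - x) := by linear_combination (-(v * t - x)) * hid
          _ = (v * yhat ^ (p-1)) * (yhat * (v * t - x)) := by rw [hyy]; ring
      exact le_of_mul_le_mul_left chain (by positivity)
  · rintro (hcirc | ⟨hx1, hx2, hx3⟩)
    · refine ⟨0, ⟨by linarith, by linarith⟩, ?_⟩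
      simp only [sub_zero, abs_zero, zero_div, abs_of_nonneg hx]
      calc (x ^ p + y ^ p) ^ (1/p) ≤ (t ^ p) ^ (1/p) :=
            Real.rpow_le_rpow (by positivity) hcirc (by positivity)
        _ = t := aux_rpow_rpow_inv hp ht.le
    · have hD : 0 < v * t - xhat := by nlinarith
      set D := v * t - xhat with hD_def
      set μ := (v * t - x) / D with hμ_def
      have hμ0 : 0 ≤ μ := div_nonneg (by linarith) hD.le
      refine ⟨v * t * (x - xhat) / D, ⟨?_, ?_⟩, ?_⟩
      · have : 0 ≤ v * t * (x - xhat) / D :=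
          div_nonneg (mul_nonneg hvt.le (by linarith)) hD.le
        linarith
      · rw [div_le_iff₀ hD]
        nlinarith [mul_le_mul_of_nonneg_left (show x - xhat ≤ D by rw [hD_def]; linarith) hvt.le]
      · have hγ0 : 0 ≤ v * t * (x - xhat) / D :=
          div_nonneg (mul_nonneg hvt.le (by linarith)) hD.le
        have e1 : x - v * t * (x - xhat) / D = xhat * μ := by
          rw [hμ_def, hD_def]; have hD' : v * t - xhat ≠ 0 := hD.ne'; field_simp; ring
        have e2 : t - (v * t * (x - xhat) / D) / v = t * μ := by
          rw [hμ_def, hD_def]; have hD' : v * t - xhat ≠ 0 := hD.ne'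
          rw [div_div, mul_comm (v * t - xhat) v, ← div_div, mul_assoc, mul_div_cancel_left₀ _ hv0.ne',
            mul_div_assoc', eq_div_iff hD', sub_mul, div_mul_cancel₀ _ hD']; ring
        have hyμ : y ≤ yhat * μ := by
          have h5 : y ≤ yhat * (v * t - x) / D := by
            rw [le_div_iff₀ hD]
            exact hx3
          rw [hμ_def]
          calc y ≤ yhat * (v * t - x) / D := h5
            _ = yhat * ((v * t - x) / D) := by ring
        rw [abs_of_nonneg hγ0, e1, e2, abs_of_nonneg (by positivity : (0:ℝ) ≤ xhat * μ)]
        calc ((xhat * μ) ^ p + y ^ p) ^ (1/p)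
            ≤ ((xhat * μ) ^ p + (yhat * μ) ^ p) ^ (1/p) := by
              apply Real.rpow_le_rpow (by positivity) _ (by positivity)
              have := Real.rpow_le_rpow hy hyμ hp0.le
              linarith
          _ = ((xhat ^ p + yhat ^ p) * μ ^ p) ^ (1/p) := by
              rw [Real.mul_rpow hxhat0.le hμ0, Real.mul_rpow hyhat0.le hμ0]; ring_nf
          _ = (t ^ p * μ ^ p) ^ (1/p) := by
              congr 1
              rw [hyp]; ring
          _ = t * μ := by
              rw [← Real.mul_rpow ht.le hμ0, aux_rpow_rpow_inv hp (by positivity)]
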